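/- If (X,d) is a complete metric space and f₁,...,fₙ are Banach contractions of X, then there exists a unique nonempty compact set A ⊆ X such that A = f₁(A) ∪ ... ∪ fₙ(A), and for every nonempty compact K ⊆ X the iterates F^k(K) of the map F(K) := f₁(K) ∪ ... ∪ fₙ(K) converge to A in the Hausdorff metric. -/

import Mathlib

open TopologicalSpace Filter EMetric Metric Set

lemma hausdorffEdist_image_le_of_lipschitz {X : Type*} [MetricSpace X] {f : X → X} {r : NNReal}
    (hf : LipschitzWith r f) {s t : Set X} (hs : IsCompact s) (hsn : s.Nonempty)
    (ht : IsCompact t) (htn : t.Nonempty) :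
    hausdorffEdist (f '' s) (f '' t) ≤ r * hausdorffEdist s t := by
  apply hausdorffEdist_le_of_mem_edist
  · rintro x ⟨a, ha, rfl⟩
    obtain ⟨y, hyt, hy⟩ := ht.exists_infEdist_eq_edist htn a
    refine ⟨f y, mem_image_of_mem _ hyt, le_trans (hf.edist_le_mul a y) ?_⟩
    exact mul_le_mul_right (hy ▸ infEdist_le_hausdorffEdist_of_mem ha) _
  · rintro x ⟨a, ha, rfl⟩
    obtain ⟨y, hys, hy⟩ := hs.exists_infEdist_eq_edist hsn a
    refine ⟨f y, mem_image_of_mem _ hys, le_trans (hf.edist_le_mul a y) ?_⟩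
    refine mul_le_mul_right ?_ _
    rw [← hy, hausdorffEdist, hausdorffEdist_comm]
    exact infEdist_le_hausdorffEdist_of_mem ha

lemma hausdorffEdist_iUnion_le {X : Type*} [MetricSpace X] {ι : Type*} (s t : ι → Set X) :
    hausdorffEdist (⋃ i, s i) (⋃ i, t i) ≤ ⨆ i, hausdorffEdist (s i) (t i) := by
  apply hausdorffEdist_le_of_infEdist
  · rintro x hx
    obtain ⟨i, hi⟩ := mem_iUnion.1 hx
    calc infEdist x (⋃ i, t i) ≤ infEdist x (t i) := infEdist_anti (subset_iUnion t i)
      _ ≤ hausdorffEdist (s i) (t i) := infEdist_le_hausdorffEdist_of_mem hi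
      _ ≤ _ := le_iSup (fun i => hausdorffEdist (s i) (t i)) i
  · rintro x hx
    obtain ⟨i, hi⟩ := mem_iUnion.1 hx
    calc infEdist x (⋃ i, s i) ≤ infEdist x (s i) := infEdist_anti (subset_iUnion s i)
      _ ≤ hausdorffEdist (s i) (t i) := by
          rw [hausdorffEdist, hausdorffEdist_comm]; exact infEdist_le_hausdorffEdist_of_mem hi
      _ ≤ _ := le_iSup (fun i => hausdorffEdist (s i) (t i)) i

/-- Hutchinson–Barnsley theorem: an IFS of Banach contractions on a complete
metric space has a unique attractor, and iterates of the Hutchinson operator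
starting from any nonempty compact set converge to it in the Hausdorff metric. -/
theorem stmt0 {X : Type*} [MetricSpace X] [CompleteSpace X] [Nonempty X]
    {n : ℕ} (hn : 0 < n) (f : Fin n → X → X) (r : Fin n → NNReal)
    (hr : ∀ i, r i < 1) (hf : ∀ i, LipschitzWith (r i) (f i)) :
    ∃ A : NonemptyCompacts X,
      ((A : Set X) = ⋃ i, f i '' (A : Set X)) ∧
      (∀ B : NonemptyCompacts X, ((B : Set X) = ⋃ i, f i '' (B : Set X)) → B = A) ∧
      (∀ K : NonemptyCompacts X, ∀ S : ℕ → NonemptyCompacts X, S 0 = K →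
        (∀ k, (S (k + 1) : Set X) = ⋃ i, f i '' (S k : Set X)) →
        Tendsto S atTop (nhds A)) := by
  haveI : Nonempty (Fin n) := ⟨⟨0, hn⟩⟩
  haveI : Nonempty (NonemptyCompacts X) :=
    ⟨⟨⟨{Classical.arbitrary X}, isCompact_singleton⟩, Set.singleton_nonempty _⟩⟩
  -- the Hutchinson operator
  set F : NonemptyCompacts X → NonemptyCompacts X := fun K =>
    ⟨⟨⋃ i, f i '' (K : Set X), isCompact_iUnion fun i => K.isCompact.image (hf i).continuous⟩,
      let i : Fin n := ⟨0, hn⟩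
      (K.nonempty.image (f i)).mono (subset_iUnion (fun i => f i '' (K : Set X)) i)⟩ with hF
  have hFcoe : ∀ K : NonemptyCompacts X, (F K : Set X) = ⋃ i, f i '' (K : Set X) := fun _ => rfl
  set c : NNReal := Finset.univ.sup r with hc
  have hc1 : c < 1 := Finset.sup_lt_iff (by norm_num) |>.2 fun i _ => hr i
  have hFlip : LipschitzWith c F := by
    intro K L
    show hausdorffEdist (F K : Set X) (F L : Set X) ≤ c * hausdorffEdist (K : Set X) L
    rw [hFcoe, hFcoe]
    refine le_trans (hausdorffEdist_iUnion_le _ _) (iSup_le fun i => ?_)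
    refine le_trans (hausdorffEdist_image_le_of_lipschitz (hf i) K.isCompact K.nonempty
      L.isCompact L.nonempty) ?_
    exact mul_le_mul_left (by exact_mod_cast ENNReal.coe_le_coe.2 (Finset.le_sup (Finset.mem_univ i))) _
  have hcontr : ContractingWith c F := ⟨hc1, hFlip⟩
  refine ⟨ContractingWith.fixedPoint F hcontr, ?_, ?_, ?_⟩
  · exact (congrArg (fun K : NonemptyCompacts X => (K : Set X)) hcontr.fixedPoint_isFixedPt).symm
  · intro B hB
    refine hcontr.fixedPoint_unique ?_
    exact NonemptyCompacts.ext hB.symm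
  · intro K S hS0 hSk
    have hiter : ∀ k, S k = F^[k] K := by
      intro k
      induction k with
      | zero => simpa using hS0
      | succ k ih =>
        rw [Function.iterate_succ_apply', ← ih]
        exact NonemptyCompacts.ext (hSk k)
    have := hcontr.tendsto_iterate_fixedPoint K
    refine this.congr fun k => (hiter k).symm
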